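/- arXiv:1610.03933 — 12 statements merged into one kernel-verified Lean document; each statement's English description precedes it below -/
import Mathlib

section
/- The Goldman Lie algebra 𝔊_ℚ of the closed torus is finitely generated as a Lie algebra over ℚ: there exists a finite subset S of 𝔊_ℚ such that the smallest Lie subalgebra containing S is all of 𝔊_ℚ. -/
/-- The underlying module of the Goldman Lie algebra of the closed torus:
the free `R`-module with basis `{e_{(i,j)} : (i,j) ∈ ℤ²}`. -/
abbrev GoldmanTorus (R : Type*) [CommRing R] := (ℤ × ℤ) →₀ R

/-- `ω((i,j),(k,l)) = i·l − j·k`. -/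
def goldmanForm (p q : ℤ × ℤ) : ℤ := p.1 * q.2 - p.2 * q.1

/-- The `R`-bilinear Goldman bracket of the closed torus, determined on basis
elements by `[e_{(i,j)}, e_{(k,l)}] = (i·l − j·k) • e_{(i+k, j+l)}`. -/
noncomputable def goldmanBracket (R : Type*) [CommRing R] :
    GoldmanTorus R →ₗ[R] GoldmanTorus R →ₗ[R] GoldmanTorus R :=
  Finsupp.lsum R fun p =>
    LinearMap.toSpanSingleton R (GoldmanTorus R →ₗ[R] GoldmanTorus R)
      (Finsupp.lsum R fun q =>
        LinearMap.toSpanSingleton R (GoldmanTorus R)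
          (goldmanForm p q • Finsupp.single (p + q) (1 : R)))

lemma goldmanBracket_single {R : Type*} [CommRing R] (p q : ℤ × ℤ) (a b : R) :
    goldmanBracket R (Finsupp.single p a) (Finsupp.single q b)
      = Finsupp.single (p + q) (a * b * (goldmanForm p q : R)) := by
  simp only [goldmanBracket, Finsupp.lsum_single, LinearMap.toSpanSingleton_apply,
    LinearMap.smul_apply, Finsupp.smul_single, smul_eq_mul, zsmul_eq_mul, mul_one]
  rw [mul_assoc]

lemma goldmanForm_swap (p q : ℤ × ℤ) : goldmanForm q p = - goldmanForm p q := by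
  simp only [goldmanForm]; ring

lemma goldmanBracket_add_comm_single {R : Type*} [CommRing R] (p : ℤ × ℤ) (a : R)
    (y : GoldmanTorus R) :
    goldmanBracket R (Finsupp.single p a) y + goldmanBracket R y (Finsupp.single p a) = 0 := by
  induction y using Finsupp.induction with
  | zero => simp
  | single_add q b f _ _ ih =>
    rw [map_add, map_add, LinearMap.add_apply]
    have h2 : goldmanBracket R (Finsupp.single p a) (Finsupp.single q b)
        + goldmanBracket R (Finsupp.single q b) (Finsupp.single p a) = 0 := by
      have hz : a * b * ((goldmanForm p q : ℤ) : R)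
          + b * a * ((goldmanForm q p : ℤ) : R) = 0 := by
        rw [goldmanForm_swap p q]; push_cast; ring
      rw [goldmanBracket_single, goldmanBracket_single, add_comm q p,
        ← Finsupp.single_add, hz, Finsupp.single_zero]
    calc goldmanBracket R (Finsupp.single p a) (Finsupp.single q b)
          + goldmanBracket R (Finsupp.single p a) f
          + (goldmanBracket R (Finsupp.single q b) (Finsupp.single p a)
          + goldmanBracket R f (Finsupp.single p a))
        = (goldmanBracket R (Finsupp.single p a) (Finsupp.single q b)
          + goldmanBracket R (Finsupp.single q b) (Finsupp.single p a))
          + (goldmanBracket R (Finsupp.single p a) f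
          + goldmanBracket R f (Finsupp.single p a)) := by abel
      _ = 0 := by rw [h2, ih, add_zero]

lemma goldmanBracket_add_comm {R : Type*} [CommRing R] (x y : GoldmanTorus R) :
    goldmanBracket R x y + goldmanBracket R y x = 0 := by
  induction x using Finsupp.induction with
  | zero => simp
  | single_add p a f _ _ ih =>
    rw [map_add, LinearMap.add_apply, map_add]
    calc goldmanBracket R (Finsupp.single p a) y + goldmanBracket R f y
          + (goldmanBracket R y (Finsupp.single p a) + goldmanBracket R y f)
        = (goldmanBracket R (Finsupp.single p a) y
            + goldmanBracket R y (Finsupp.single p a))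
          + (goldmanBracket R f y + goldmanBracket R y f) := by abel
      _ = 0 := by rw [goldmanBracket_add_comm_single, ih, add_zero]

lemma goldmanBracket_self {R : Type*} [CommRing R] (x : GoldmanTorus R) :
    goldmanBracket R x x = 0 := by
  induction x using Finsupp.induction with
  | zero => simp
  | single_add p a f _ _ ih =>
    simp only [map_add, LinearMap.add_apply]
    have hpp : goldmanBracket R (Finsupp.single p a) (Finsupp.single p a) = 0 := by
      rw [goldmanBracket_single]
      have : goldmanForm p p = 0 := by simp [goldmanForm]; ring
      simp [this]
    rw [hpp, ih]
    have h := goldmanBracket_add_comm_single p a f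
    abel_nf at h ⊢
    exact h

lemma goldmanBracket_leibniz₃ {R : Type*} [CommRing R] (p q r : ℤ × ℤ) (a b c : R) :
    goldmanBracket R (Finsupp.single p a)
        (goldmanBracket R (Finsupp.single q b) (Finsupp.single r c))
      = goldmanBracket R (goldmanBracket R (Finsupp.single p a) (Finsupp.single q b))
          (Finsupp.single r c)
        + goldmanBracket R (Finsupp.single q b)
            (goldmanBracket R (Finsupp.single p a) (Finsupp.single r c)) := by
  simp only [goldmanBracket_single]
  rw [add_assoc p q r, add_left_comm q p r, ← Finsupp.single_add]
  congr 1
  simp only [goldmanForm, Prod.fst_add, Prod.snd_add]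
  push_cast
  ring

lemma goldmanBracket_leibniz₂ {R : Type*} [CommRing R] (p q : ℤ × ℤ) (a b : R)
    (z : GoldmanTorus R) :
    goldmanBracket R (Finsupp.single p a) (goldmanBracket R (Finsupp.single q b) z)
      = goldmanBracket R (goldmanBracket R (Finsupp.single p a) (Finsupp.single q b)) z
        + goldmanBracket R (Finsupp.single q b)
            (goldmanBracket R (Finsupp.single p a) z) := by
  induction z using Finsupp.induction with
  | zero => simp
  | single_add r c f _ _ ih =>
    simp only [map_add]
    rw [goldmanBracket_leibniz₃, ih]
    abel

lemma goldmanBracket_leibniz₁ {R : Type*} [CommRing R] (p : ℤ × ℤ) (a : R)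
    (y z : GoldmanTorus R) :
    goldmanBracket R (Finsupp.single p a) (goldmanBracket R y z)
      = goldmanBracket R (goldmanBracket R (Finsupp.single p a) y) z
        + goldmanBracket R y (goldmanBracket R (Finsupp.single p a) z) := by
  induction y using Finsupp.induction with
  | zero => simp
  | single_add q b f _ _ ih =>
    simp only [map_add, LinearMap.add_apply]
    rw [goldmanBracket_leibniz₂, ih]
    abel

lemma goldmanBracket_leibniz {R : Type*} [CommRing R] (x y z : GoldmanTorus R) :
    goldmanBracket R x (goldmanBracket R y z)
      = goldmanBracket R (goldmanBracket R x y) z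
        + goldmanBracket R y (goldmanBracket R x z) := by
  induction x using Finsupp.induction with
  | zero => simp
  | single_add p a f _ _ ih =>
    simp only [map_add, LinearMap.add_apply]
    rw [goldmanBracket_leibniz₁, ih]
    abel

/-- The Goldman Lie ring structure on the free module over `ℤ²`. -/
noncomputable instance (R : Type*) [CommRing R] : LieRing (GoldmanTorus R) where
  bracket x y := goldmanBracket R x y
  add_lie x y z := by simp
  lie_add x y z := by simp
  lie_self x := goldmanBracket_self x
  leibniz_lie x y z := goldmanBracket_leibniz x y z

/-- The Goldman Lie algebra of the closed torus over `R`. -/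
noncomputable instance (R : Type*) [CommRing R] : LieAlgebra R (GoldmanTorus R) where
  lie_smul r x y := by
    show goldmanBracket R x (r • y) = r • goldmanBracket R x y
    simp

lemma goldmanTorus_lie_def {R : Type*} [CommRing R] (x y : GoldmanTorus R) :
    ⁅x, y⁆ = goldmanBracket R x y := rfl

noncomputable def gtE (p : ℤ × ℤ) : GoldmanTorus ℚ := Finsupp.single p 1

lemma gtE_step {L : LieSubalgebra ℚ (GoldmanTorus ℚ)} {p q r : ℤ × ℤ}
    (hp : gtE p ∈ L) (hq : gtE q ∈ L) (hω : goldmanForm p q ≠ 0)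
    (hr : p + q = r) : gtE r ∈ L := by
  subst hr
  have hbr : ⁅gtE p, gtE q⁆ = ((goldmanForm p q : ℚ)) • gtE (p + q) := by
    simp only [goldmanTorus_lie_def, gtE, goldmanBracket_single, one_mul,
      Finsupp.smul_single, smul_eq_mul, mul_one]
  have h := L.lie_mem hp hq
  rw [hbr] at h
  have := L.smul_mem ((goldmanForm p q : ℚ))⁻¹ h
  rwa [smul_smul, inv_mul_cancel₀ (by exact_mod_cast hω), one_smul] at this

theorem goldmanTorus_rat_finitely_generated :
    ∃ S : Finset (GoldmanTorus ℚ),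
      LieSubalgebra.lieSpan ℚ (GoldmanTorus ℚ) ↑S = ⊤ := by
  classical
  refine ⟨{gtE (0,0), gtE (1,0), gtE (-1,0), gtE (0,1), gtE (0,-1)}, ?_⟩
  set L := LieSubalgebra.lieSpan ℚ (GoldmanTorus ℚ)
      ↑({gtE (0,0), gtE (1,0), gtE (-1,0), gtE (0,1), gtE (0,-1)} : Finset (GoldmanTorus ℚ))
    with hL
  have hmem : ∀ x ∈ ({gtE (0,0), gtE (1,0), gtE (-1,0), gtE (0,1), gtE (0,-1)} :
      Finset (GoldmanTorus ℚ)), x ∈ L := fun x hx =>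
    LieSubalgebra.subset_lieSpan (by exact_mod_cast hx)
  have h00 : gtE (0,0) ∈ L := hmem _ (by simp)
  have h10 : gtE (1,0) ∈ L := hmem _ (by simp)
  have hm10 : gtE (-1,0) ∈ L := hmem _ (by simp)
  have h01 : gtE (0,1) ∈ L := hmem _ (by simp)
  have h0m1 : gtE (0,-1) ∈ L := hmem _ (by simp)
  have row1 : ∀ i : ℤ, gtE (i, 1) ∈ L := by
    intro i
    induction i using Int.induction_on with
    | zero => exact h01
    | succ k ih =>
      exact gtE_step h10 ih (by simp [goldmanForm])
        (by simp only [Prod.mk_add_mk, Prod.mk.injEq]; omega)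
    | pred k ih =>
      exact gtE_step hm10 ih (by simp [goldmanForm])
        (by simp only [Prod.mk_add_mk, Prod.mk.injEq]; omega)
  have rowm1 : ∀ i : ℤ, gtE (i, -1) ∈ L := by
    intro i
    induction i using Int.induction_on with
    | zero => exact h0m1
    | succ k ih =>
      exact gtE_step h10 ih (by simp [goldmanForm])
        (by simp only [Prod.mk_add_mk, Prod.mk.injEq]; omega)
    | pred k ih =>
      exact gtE_step hm10 ih (by simp [goldmanForm])
        (by simp only [Prod.mk_add_mk, Prod.mk.injEq]; omega)
  have hall : ∀ j i : ℤ, gtE (i, j) ∈ L := by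
    intro j
    induction j using Int.induction_on with
    | zero =>
      intro i
      rcases eq_or_ne i 0 with rfl | hi
      · exact h00
      · exact gtE_step (rowm1 1) (row1 (i - 1))
          (by simp only [goldmanForm]; omega)
          (by simp only [Prod.mk_add_mk, Prod.mk.injEq]; omega)
    | succ k ih =>
      intro i
      rcases eq_or_ne i 0 with rfl | hi
      · exact gtE_step (row1 (-1)) (ih 1)
          (by simp only [goldmanForm]; omega)
          (by simp only [Prod.mk_add_mk, Prod.mk.injEq]; omega)
      · exact gtE_step h01 (ih i)
          (by simp only [goldmanForm]; omega)
          (by simp only [Prod.mk_add_mk, Prod.mk.injEq]; omega)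
    | pred k ih =>
      intro i
      rcases eq_or_ne i 0 with rfl | hi
      · exact gtE_step (rowm1 (-1)) (ih 1)
          (by simp only [goldmanForm]; omega)
          (by simp only [Prod.mk_add_mk, Prod.mk.injEq]; omega)
      · exact gtE_step h0m1 (ih i)
          (by simp only [goldmanForm]; omega)
          (by simp only [Prod.mk_add_mk, Prod.mk.injEq]; omega)
  rw [eq_top_iff]
  intro x hx
  clear hx
  induction x using Finsupp.induction with
  | zero => exact L.zero_mem
  | single_add p a f _ _ ih =>
    refine L.add_mem ?_ ih
    have : Finsupp.single p a = a • gtE p := by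
      rw [gtE, Finsupp.smul_single, smul_eq_mul, mul_one]
    rw [this]
    exact L.smul_mem a (hall p.2 p.1)
end

section
/- The Goldman Lie algebra 𝔊_ℚ of the closed torus is generated as a Lie algebra over ℚ by the three elements e_{(1,0)}, e_{(0,1)}, and e_{(−1,−1)} + e_{(0,1)} + e_{(0,0)} (i.e., by a, b, and a^{−1}b^{−1} + b + 1): the smallest Lie subalgebra of 𝔊_ℚ containing these three elements is all of 𝔊_ℚ. -/
section Aux

lemma goldman_step {S : LieSubalgebra ℚ (GoldmanTorus ℚ)} {p q : ℤ × ℤ}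
    (hp : Finsupp.single p (1 : ℚ) ∈ S) (hq : Finsupp.single q (1 : ℚ) ∈ S)
    (h : goldmanForm p q ≠ 0) : Finsupp.single (p + q) (1 : ℚ) ∈ S := by
  have hb := S.lie_mem hp hq
  rw [goldmanTorus_lie_def, goldmanBracket_single] at hb
  have h2 := S.smul_mem ((goldmanForm p q : ℚ))⁻¹ hb
  rw [Finsupp.smul_single] at h2
  have hz : ((goldmanForm p q : ℚ)) ≠ 0 := by exact_mod_cast h
  have hval : ((goldmanForm p q : ℚ))⁻¹ • ((1 : ℚ) * 1 * (goldmanForm p q : ℚ)) = 1 := by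
    rw [smul_eq_mul]; field_simp
  rwa [hval] at h2

lemma goldman_mem_congr {S : LieSubalgebra ℚ (GoldmanTorus ℚ)} {p q : ℤ × ℤ} (h : p = q)
    (hp : Finsupp.single p (1 : ℚ) ∈ S) : Finsupp.single q (1 : ℚ) ∈ S := h ▸ hp

end Aux

theorem goldmanTorus_rat_generated_by_three :
    LieSubalgebra.lieSpan ℚ (GoldmanTorus ℚ)
      {Finsupp.single (1, 0) 1, Finsupp.single (0, 1) 1,
        Finsupp.single (-1, -1) 1 + Finsupp.single (0, 1) 1 + Finsupp.single (0, 0) 1}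
      = ⊤ := by
  set S := LieSubalgebra.lieSpan ℚ (GoldmanTorus ℚ)
      {Finsupp.single (1, 0) 1, Finsupp.single (0, 1) 1,
        Finsupp.single (-1, -1) 1 + Finsupp.single (0, 1) 1 + Finsupp.single (0, 0) 1}
    with hSdef
  have ha : Finsupp.single ((1 : ℤ), (0 : ℤ)) (1 : ℚ) ∈ S :=
    LieSubalgebra.subset_lieSpan (by simp)
  have hb : Finsupp.single ((0 : ℤ), (1 : ℤ)) (1 : ℚ) ∈ S :=
    LieSubalgebra.subset_lieSpan (by simp)
  have hc : Finsupp.single ((-1 : ℤ), (-1 : ℤ)) (1 : ℚ) + Finsupp.single (0, 1) 1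
      + Finsupp.single (0, 0) 1 ∈ S :=
    LieSubalgebra.subset_lieSpan (by simp)
  -- e_{(1,1)}
  have h11 : Finsupp.single ((1 : ℤ), (1 : ℤ)) (1 : ℚ) ∈ S :=
    goldman_mem_congr (by simp) (goldman_step ha hb (by decide))
  -- bracket of a with c
  have hac := S.lie_mem ha hc
  rw [goldmanTorus_lie_def] at hac
  simp only [map_add, goldmanBracket_single] at hac
  norm_num [goldmanForm] at hac
  -- hac : single (0,-1) (-1) + single (1,1) 1 ∈ S  (after simplification)
  have h0m1 : Finsupp.single ((0 : ℤ), (-1 : ℤ)) (1 : ℚ) ∈ S := by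
    have h1 : Finsupp.single ((0 : ℤ), (-1 : ℤ)) (-1 : ℚ) ∈ S := by
      have := S.sub_mem hac h11
      simpa using this
    have := S.smul_mem (-1 : ℚ) h1
    simpa using this
  -- bracket of b with c gives e_{(-1,0)}
  have hm10 : Finsupp.single ((-1 : ℤ), (0 : ℤ)) (1 : ℚ) ∈ S := by
    have hbc := S.lie_mem hb hc
    rw [goldmanTorus_lie_def] at hbc
    simp only [map_add, goldmanBracket_single] at hbc
    norm_num [goldmanForm] at hbc
    simpa using hbc
  -- e_{(-1,-1)}
  have hm1m1 : Finsupp.single ((-1 : ℤ), (-1 : ℤ)) (1 : ℚ) ∈ S :=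
    goldman_mem_congr (by simp) (goldman_step hm10 h0m1 (by decide))
  -- e_{(0,0)}
  have h00 : Finsupp.single ((0 : ℤ), (0 : ℤ)) (1 : ℚ) ∈ S := by
    have h := S.sub_mem (S.sub_mem hc hb) hm1m1
    have e : Finsupp.single ((-1 : ℤ), (-1 : ℤ)) (1 : ℚ) + Finsupp.single (0, 1) 1
        + Finsupp.single (0, 0) 1 - Finsupp.single (0, 1) 1 - Finsupp.single (-1, -1) 1
        = Finsupp.single ((0 : ℤ), (0 : ℤ)) (1 : ℚ) := by abel
    rwa [e] at h
  -- the whole row j = 1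
  have row1 : ∀ i : ℤ, Finsupp.single (i, (1 : ℤ)) (1 : ℚ) ∈ S := by
    intro i
    induction i using Int.induction_on with
    | zero => exact hb
    | succ k ih =>
      exact goldman_mem_congr (by simp [Prod.ext_iff]; ring)
        (goldman_step ha ih (by simp [goldmanForm]))
    | pred k ih =>
      exact goldman_mem_congr (by simp [Prod.ext_iff]; ring)
        (goldman_step hm10 ih (by simp [goldmanForm]))
  -- all columns with i ≠ 0
  have cols : ∀ i : ℤ, i ≠ 0 → ∀ j : ℤ, Finsupp.single (i, j) (1 : ℚ) ∈ S := by
    intro i hi j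
    induction j using Int.induction_on with
    | zero =>
      exact goldman_mem_congr (by simp [Prod.ext_iff])
        (goldman_step h0m1 (row1 i) (by simpa [goldmanForm] using hi))
    | succ k ih =>
      exact goldman_mem_congr (by simp [Prod.ext_iff]; ring)
        (goldman_step hb ih (by simpa [goldmanForm] using hi))
    | pred k ih =>
      exact goldman_mem_congr (by simp [Prod.ext_iff]; ring)
        (goldman_step h0m1 ih (by simpa [goldmanForm] using hi))
  -- all basis vectors
  have hall : ∀ p : ℤ × ℤ, Finsupp.single p (1 : ℚ) ∈ S := by
    rintro ⟨i, j⟩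
    by_cases hi : i = 0
    · subst hi
      by_cases hj : j = 0
      · subst hj; exact h00
      · exact goldman_mem_congr (by simp [Prod.ext_iff])
          (goldman_step hm10 (cols 1 one_ne_zero j) (by simpa [goldmanForm] using hj))
    · exact cols i hi j
  rw [eq_top_iff]
  rintro x -
  induction x using Finsupp.induction with
  | zero => exact S.zero_mem
  | single_add p a f _ _ ih =>
    refine S.add_mem ?_ ih
    have := S.smul_mem a (hall p)
    simpa using this
end

section
/- The Goldman Lie algebra 𝔊_ℚ of the closed torus is not nilpotent: its lower central series never reaches zero, i.e., every term of the lower central series of 𝔊_ℚ is nonzero. -/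
theorem goldmanTorus_rat_not_nilpotent :
    ∀ n : ℕ, LieModule.lowerCentralSeries ℚ (GoldmanTorus ℚ) (GoldmanTorus ℚ) n ≠ ⊥ := by
  have key : ∀ n : ℕ, (Finsupp.single ((n : ℤ), (1 : ℤ)) (1 : ℚ) : GoldmanTorus ℚ)
      ∈ LieModule.lowerCentralSeries ℚ (GoldmanTorus ℚ) (GoldmanTorus ℚ) n := by
    intro n
    induction n with
    | zero => exact trivial
    | succ n ih =>
      have heq : (Finsupp.single (((n : ℤ) + 1), (1 : ℤ)) (1 : ℚ) : GoldmanTorus ℚ)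
          = ⁅(Finsupp.single ((1 : ℤ), (0 : ℤ)) (1 : ℚ) : GoldmanTorus ℚ),
              (Finsupp.single ((n : ℤ), (1 : ℤ)) (1 : ℚ) : GoldmanTorus ℚ)⁆ := by
        rw [goldmanTorus_lie_def, goldmanBracket_single]
        have h1 : ((1 : ℤ), (0 : ℤ)) + ((n : ℤ), (1 : ℤ)) = (((n : ℤ) + 1), (1 : ℤ)) := by
          simp [Prod.ext_iff]; ring
        have h2 : goldmanForm ((1 : ℤ), (0 : ℤ)) ((n : ℤ), (1 : ℤ)) = 1 := by
          simp [goldmanForm]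
        rw [h1, h2]; norm_num
      rw [LieModule.lowerCentralSeries_succ]
      have := LieSubmodule.lie_mem_lie
        (I := (⊤ : LieIdeal ℚ (GoldmanTorus ℚ)))
        (LieSubmodule.mem_top (Finsupp.single ((1 : ℤ), (0 : ℤ)) (1 : ℚ))) ih
      push_cast [heq]
      exact this
  intro n h
  have hmem := key n
  rw [h] at hmem
  simp only [LieSubmodule.mem_bot] at hmem
  exact one_ne_zero (Finsupp.single_eq_zero.mp hmem)
end

section
/- The Goldman Lie algebra 𝔊_ℚ of the closed torus is not solvable: its derived series never reaches zero, i.e., every term of the derived series of 𝔊_ℚ is nonzero. -/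
lemma goldman_mem_derived :
    ∀ n : ℕ, ∀ p : ℤ × ℤ, p ≠ 0 →
      Finsupp.single p (1 : ℚ) ∈ LieAlgebra.derivedSeries ℚ (GoldmanTorus ℚ) n := by
  intro n
  induction n with
  | zero => intro p _; simp [LieAlgebra.derivedSeries_def]
  | succ n ih =>
    intro p hp
    obtain ⟨q, r, hq, hr, hqr, hw⟩ :
        ∃ q r : ℤ × ℤ, q ≠ 0 ∧ r ≠ 0 ∧ q + r = p ∧ goldmanForm q r ≠ 0 := by
      rcases p with ⟨i, j⟩
      by_cases hj : j = 0
      · have hi : i ≠ 0 := by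
          intro h; exact hp (by simp [h, hj, Prod.ext_iff])
        exact ⟨(i, 1), (0, -1), by simp [Prod.ext_iff, hi], by simp [Prod.ext_iff],
          by simp [Prod.ext_iff, hj], by simp [goldmanForm, hi]⟩
      · exact ⟨(i + 1, j), (-1, 0), by simp [Prod.ext_iff, hj], by simp [Prod.ext_iff],
          by simp [Prod.ext_iff], by simp [goldmanForm, hj]⟩
    have hb : ⁅(Finsupp.single q (1 : ℚ) : GoldmanTorus ℚ), Finsupp.single r (1 : ℚ)⁆
        ∈ LieAlgebra.derivedSeries ℚ (GoldmanTorus ℚ) (n + 1) := by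
      rw [LieAlgebra.derivedSeries_def, LieAlgebra.derivedSeriesOfIdeal_succ]
      exact LieSubmodule.lie_mem_lie (ih q hq) (ih r hr)
    have hval : ⁅(Finsupp.single q (1 : ℚ) : GoldmanTorus ℚ), Finsupp.single r (1 : ℚ)⁆
        = Finsupp.single p ((goldmanForm q r : ℚ)) := by
      rw [goldmanTorus_lie_def, goldmanBracket_single, hqr, one_mul, one_mul]
    have hw' : (goldmanForm q r : ℚ) ≠ 0 := Int.cast_ne_zero.mpr hw
    have := (LieAlgebra.derivedSeries ℚ (GoldmanTorus ℚ) (n + 1)).smul_mem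
      ((goldmanForm q r : ℚ))⁻¹ hb
    rwa [hval, Finsupp.smul_single, smul_eq_mul, inv_mul_cancel₀ hw'] at this

theorem goldmanTorus_rat_not_solvable :
    ∀ n : ℕ, LieAlgebra.derivedSeries ℚ (GoldmanTorus ℚ) n ≠ ⊥ := by
  intro n hbot
  have h := goldman_mem_derived n (1, 0) (by simp [Prod.ext_iff])
  rw [hbot] at h
  have : (Finsupp.single ((1 : ℤ), (0 : ℤ)) (1 : ℚ) : GoldmanTorus ℚ) = 0 :=
    (LieSubmodule.mem_bot _).mp h
  exact one_ne_zero (Finsupp.single_eq_zero.mp this)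
end

section
/- In the Goldman Lie algebra 𝔊_ℤ of the closed torus, for every element w of the derived Lie subalgebra [𝔊_ℤ, 𝔊_ℤ] and every (i,j) ∈ ℤ² with (i,j) ≠ (0,0), the coefficient of the basis element e_{(i,j)} in w is divisible by gcd(i,j). -/
lemma goldman_bracket_mem_div (x y : GoldmanTorus ℤ) (i j : ℤ) (hij : (i, j) ≠ (0, 0)) :
    (Int.gcd i j : ℤ) ∣ (goldmanBracket ℤ x y) (i, j) := by
  induction x using Finsupp.induction with
  | zero => simp
  | single_add p a f _ _ ihx =>
    rw [map_add, LinearMap.add_apply, Finsupp.add_apply]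
    refine dvd_add ?_ ihx
    clear ihx
    induction y using Finsupp.induction with
    | zero => simp
    | single_add q b g _ _ ihy =>
      rw [map_add, Finsupp.add_apply]
      refine dvd_add ?_ ihy
      rw [goldmanBracket_single]
      rcases eq_or_ne (p + q) (i, j) with h | h
      · rw [h, Finsupp.single_eq_same]
        have hd : (Int.gcd i j : ℤ) ∣ goldmanForm p q := by
          have : goldmanForm p q = p.1 * j - p.2 * i := by
            have h1 : p.1 + q.1 = i := congrArg Prod.fst h
            have h2 : p.2 + q.2 = j := congrArg Prod.snd h
            simp only [goldmanForm]; rw [← h1, ← h2]; ring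
          rw [this]
          exact dvd_sub (Dvd.dvd.mul_left (Int.gcd_dvd_right _ _) _)
            (Dvd.dvd.mul_left (Int.gcd_dvd_left _ _) _)
        exact Dvd.dvd.mul_left hd _
      · rw [Finsupp.single_eq_of_ne h.symm]
        exact dvd_zero _

theorem goldmanTorus_int_derived_coeff_gcd_dvd (w : GoldmanTorus ℤ)
    (hw : w ∈ ⁅(⊤ : LieIdeal ℤ (GoldmanTorus ℤ)), (⊤ : LieIdeal ℤ (GoldmanTorus ℤ))⁆)
    (i j : ℤ) (hij : (i, j) ≠ (0, 0)) :
    (Int.gcd i j : ℤ) ∣ w (i, j) := by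
  let D : LieIdeal ℤ (GoldmanTorus ℤ) :=
    { carrier := {w : GoldmanTorus ℤ | ∀ i j : ℤ, (i, j) ≠ (0, 0) →
        (Int.gcd i j : ℤ) ∣ w (i, j)}
      add_mem' := fun ha hb i j h => by
        rw [Finsupp.add_apply]; exact dvd_add (ha i j h) (hb i j h)
      zero_mem' := fun i j h => by simp
      smul_mem' := fun c x hx i j h => by
        rw [Finsupp.smul_apply]; exact Dvd.dvd.mul_left (hx i j h) c
      lie_mem := fun {x m} hm i j h => goldman_bracket_mem_div x m i j h }
  have hle : ⁅(⊤ : LieIdeal ℤ (GoldmanTorus ℤ)), (⊤ : LieIdeal ℤ (GoldmanTorus ℤ))⁆ ≤ D := by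
    rw [LieSubmodule.lieIdeal_oper_eq_span, LieSubmodule.lieSpan_le]
    rintro m ⟨x, n, rfl⟩
    exact fun i j h => goldman_bracket_mem_div x n i j h
  exact hle hw i j hij
end

section
/- For every integer n > 2, the element (n−1)·e_{(n,0)} of the Goldman Lie algebra 𝔊_ℤ of the closed torus does not lie in the derived Lie subalgebra [𝔊_ℤ, 𝔊_ℤ]; in particular it cannot be written as an integer linear combination of brackets of basis elements. -/
lemma goldmanBracket_apply_dvd (n : ℤ) (x y : GoldmanTorus ℤ) :
    n ∣ (goldmanBracket ℤ x y) (n, 0) := by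
  induction x using Finsupp.induction with
  | zero => simp
  | single_add p a f _ _ ih =>
    rw [map_add, LinearMap.add_apply, Finsupp.add_apply]
    refine dvd_add ?_ ih
    clear ih
    induction y using Finsupp.induction with
    | zero => simp
    | single_add q b g _ _ ih2 =>
      rw [map_add, Finsupp.add_apply]
      refine dvd_add ?_ ih2
      rw [goldmanBracket_single, Finsupp.single_apply]
      split
      · next h =>
        have h1 : p.1 + q.1 = n := congrArg Prod.fst h
        have h2 : p.2 + q.2 = 0 := congrArg Prod.snd h
        refine Dvd.dvd.mul_left ⟨-p.2, ?_⟩ _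
        simp only [goldmanForm]
        push_cast
        linear_combination p.1 * h2 - p.2 * h1
      · exact dvd_zero n

theorem goldmanTorus_int_not_in_derived (n : ℤ) (hn : 2 < n) :
    (n - 1) • (Finsupp.single (n, 0) 1 : GoldmanTorus ℤ)
      ∉ ⁅(⊤ : LieIdeal ℤ (GoldmanTorus ℤ)), (⊤ : LieIdeal ℤ (GoldmanTorus ℤ))⁆ := by
  intro hmem
  let p : Submodule ℤ (GoldmanTorus ℤ) :=
    { carrier := {x | n ∣ x (n, 0)}
      add_mem' := fun {a b} ha hb => by
        simpa [Finsupp.add_apply] using dvd_add ha hb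
      zero_mem' := by simp
      smul_mem' := fun c x hx => by
        simpa [Finsupp.smul_apply] using Dvd.dvd.mul_left hx c }
  let S : LieIdeal ℤ (GoldmanTorus ℤ) :=
    { p with lie_mem := fun {x m} _ => goldmanBracket_apply_dvd n x m }
  have hle : ⁅(⊤ : LieIdeal ℤ (GoldmanTorus ℤ)), (⊤ : LieIdeal ℤ (GoldmanTorus ℤ))⁆ ≤ S := by
    rw [LieSubmodule.lieIdeal_oper_eq_span]
    refine (LieSubmodule.lieSpan_le).mpr ?_
    rintro _ ⟨x, y, rfl⟩
    exact goldmanBracket_apply_dvd n x y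
  have hdvd : n ∣ ((n - 1) • (Finsupp.single (n, 0) 1 : GoldmanTorus ℤ)) (n, 0) :=
    hle hmem
  rw [Finsupp.smul_apply, Finsupp.single_apply, if_pos rfl, smul_eq_mul, mul_one] at hdvd
  have h1 : n ∣ (1 : ℤ) := (dvd_sub_right dvd_rfl).mp (by simpa using hdvd)
  have := Int.le_of_dvd one_pos h1
  omega
end

section
/- The Goldman Lie algebra 𝔊_ℤ of the closed torus is not finitely generated as a Lie algebra over ℤ: there is no finite subset S of 𝔊_ℤ such that the smallest Lie subalgebra containing S is all of 𝔊_ℤ. -/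
lemma goldmanBracket_coeff_dvd (n : ℤ) (x y : GoldmanTorus ℤ) (r : ℤ × ℤ)
    (h1 : n ∣ r.1) (h2 : n ∣ r.2) : n ∣ goldmanBracket ℤ x y r := by
  induction x using Finsupp.induction with
  | zero => simp
  | single_add p a f _ _ ihx =>
    rw [map_add, LinearMap.add_apply, Finsupp.add_apply]
    refine dvd_add ?_ ihx
    clear ihx
    induction y using Finsupp.induction with
    | zero => simp
    | single_add q b g _ _ ihy =>
      rw [map_add, Finsupp.add_apply]
      refine dvd_add ?_ ihy
      rw [goldmanBracket_single, Finsupp.single_apply]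
      split
      · next heq =>
        obtain ⟨s, hs⟩ := h1
        obtain ⟨t, ht⟩ := h2
        have hq1 : q.1 = r.1 - p.1 := by
          have := congrArg Prod.fst heq; simp at this; omega
        have hq2 : q.2 = r.2 - p.2 := by
          have := congrArg Prod.snd heq; simp at this; omega
        have hω : goldmanForm p q = n * (p.1 * t - p.2 * s) := by
          simp only [goldmanForm, hq1, hq2, hs, ht]; ring
        have hd : n ∣ goldmanForm p q := ⟨_, hω⟩
        simpa using hd.mul_left (a * b)
      · exact dvd_zero n

/-- The "mod n" Lie subalgebra used to separate a candidate generating set from `⊤`. -/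
noncomputable def goldmanModSubalgebra (n : ℤ) : LieSubalgebra ℤ (GoldmanTorus ℤ) where
  carrier := {x | ∀ r : ℤ × ℤ, r ≠ 0 → n ∣ r.1 → n ∣ r.2 → n ∣ x r}
  add_mem' {x y} hx hy r hr h1 h2 := by
    rw [Finsupp.add_apply]; exact dvd_add (hx r hr h1 h2) (hy r hr h1 h2)
  zero_mem' := by simp
  smul_mem' c x hx r hr h1 h2 := by
    rw [Finsupp.smul_apply, smul_eq_mul]; exact (hx r hr h1 h2).mul_left c
  lie_mem' {x y} _ _ r _ h1 h2 := goldmanBracket_coeff_dvd n x y r h1 h2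

theorem goldmanTorus_int_not_finitely_generated :
    ¬ ∃ S : Finset (GoldmanTorus ℤ),
        LieSubalgebra.lieSpan ℤ (GoldmanTorus ℤ) ↑S = ⊤ := by
  rintro ⟨S, hS⟩
  set N : ℕ := 2 + S.sup (fun s => s.support.sup fun r => max r.1.natAbs r.2.natAbs) with hN
  have hN2 : 2 ≤ N := Nat.le_add_right 2 _
  have hsub : (↑S : Set (GoldmanTorus ℤ)) ⊆ ↑(goldmanModSubalgebra (N : ℤ)) := by
    intro x hx r hr h1 h2
    rcases Finset.mem_coe.mp hx with hxS
    by_cases hxr : x r = 0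
    · simp [hxr]
    · exfalso
      have hrsupp : r ∈ x.support := Finsupp.mem_support_iff.mpr hxr
      have hle : max r.1.natAbs r.2.natAbs ≤ N - 2 := by
        have h1' : (x.support.sup fun r => max r.1.natAbs r.2.natAbs)
            ≤ S.sup (fun s => s.support.sup fun r => max r.1.natAbs r.2.natAbs) :=
          Finset.le_sup (f := fun s => s.support.sup fun r => max r.1.natAbs r.2.natAbs) hxS
        have h2' : max r.1.natAbs r.2.natAbs
            ≤ x.support.sup fun r => max r.1.natAbs r.2.natAbs :=
          Finset.le_sup (f := fun r => max r.1.natAbs r.2.natAbs) hrsupp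
        omega
      -- r ≠ 0, so some coordinate is a nonzero multiple of N
      have hr1 : r.1 ≠ 0 ∨ r.2 ≠ 0 := by
        by_contra h; push_neg at h
        exact hr (Prod.ext h.1 h.2)
      have habs : N ≤ r.1.natAbs ∨ N ≤ r.2.natAbs := by
        rcases hr1 with h | h
        · left
          have hd : N ∣ r.1.natAbs := by simpa using Int.natAbs_dvd_natAbs.mpr h1
          exact Nat.le_of_dvd (Int.natAbs_pos.mpr h) hd
        · right
          have hd : N ∣ r.2.natAbs := by simpa using Int.natAbs_dvd_natAbs.mpr h2
          exact Nat.le_of_dvd (Int.natAbs_pos.mpr h) hd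
      simp only [max_le_iff] at hle
      omega
  have hle : LieSubalgebra.lieSpan ℤ (GoldmanTorus ℤ) ↑S ≤ goldmanModSubalgebra (N : ℤ) :=
    LieSubalgebra.lieSpan_le.mpr hsub
  rw [hS] at hle
  have hmem : (Finsupp.single ((N : ℤ), 0) 1 : GoldmanTorus ℤ)
      ∈ goldmanModSubalgebra (N : ℤ) := hle trivial
  have := hmem ((N : ℤ), 0) (by
      intro h
      have := congrArg Prod.fst h
      simp at this
      omega) ⟨1, by ring⟩ ⟨0, by ring⟩
  rw [Finsupp.single_apply] at this
  simp only [if_pos rfl] at this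
  have := Int.le_of_dvd one_pos this
  omega
end

section
/- The derived Lie subalgebra of the Goldman Lie algebra 𝔊_ℤ of the closed torus equals, as a ℤ-submodule, the span of the set {gcd(i,j)·e_{(i,j)} : (i,j) ∈ ℤ², (i,j) ≠ (0,0)}; equivalently, an element w ∈ 𝔊_ℤ lies in [𝔊_ℤ, 𝔊_ℤ] if and only if its coefficient at (0,0) is zero and for every (i,j) ≠ (0,0) its coefficient at (i,j) is divisible by gcd(i,j). -/
section GoldmanDerived

/-- The candidate submodule: coefficient at `(0,0)` vanishes and the coefficient
at each `p ≠ 0` is divisible by `gcd p.1 p.2`. -/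
noncomputable def goldmanM : Submodule ℤ (GoldmanTorus ℤ) where
  carrier := {w | w 0 = 0 ∧ ∀ p : ℤ × ℤ, p ≠ 0 → (Int.gcd p.1 p.2 : ℤ) ∣ w p}
  add_mem' := by
    rintro a b ⟨ha0, ha⟩ ⟨hb0, hb⟩
    refine ⟨?_, fun p hp => ?_⟩
    · simp [Finsupp.add_apply, ha0, hb0]
    · simpa [Finsupp.add_apply] using dvd_add (ha p hp) (hb p hp)
  zero_mem' := ⟨rfl, fun p _ => dvd_zero _⟩
  smul_mem' := by
    rintro c a ⟨h0, h⟩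
    refine ⟨by simp [Finsupp.smul_apply, h0], fun p hp => ?_⟩
    simpa [Finsupp.smul_apply] using (h p hp).mul_left c

lemma goldmanBracket_single_mem_M (p q : ℤ × ℤ) (a b : ℤ) :
    goldmanBracket ℤ (Finsupp.single p a) (Finsupp.single q b) ∈ goldmanM := by
  rw [goldmanBracket_single]
  constructor
  · rw [Finsupp.single_apply]
    split_ifs with h
    · have h1 : p.1 + q.1 = 0 := by simpa using congrArg Prod.fst h
      have h2 : p.2 + q.2 = 0 := by simpa using congrArg Prod.snd h
      have hform : goldmanForm p q = 0 := by
        simp only [goldmanForm]; linear_combination p.1 * h2 - p.2 * h1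
      simp [hform]
    · rfl
  · intro r hr
    rw [Finsupp.single_apply]
    split_ifs with h
    · subst h
      have hd : (Int.gcd (p + q).1 (p + q).2 : ℤ) ∣ goldmanForm p q := by
        have h1 : (Int.gcd (p + q).1 (p + q).2 : ℤ) ∣ (p + q).1 := Int.gcd_dvd_left _ _
        have h2 : (Int.gcd (p + q).1 (p + q).2 : ℤ) ∣ (p + q).2 := Int.gcd_dvd_right _ _
        have heq : goldmanForm p q = p.1 * (p + q).2 - p.2 * (p + q).1 := by
          simp only [goldmanForm, Prod.fst_add, Prod.snd_add]; ring
        rw [heq]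
        exact dvd_sub (h2.mul_left _) (h1.mul_left _)
      exact Dvd.dvd.mul_left hd _
    · exact dvd_zero _

lemma goldmanBracket_single_left_mem_M (p : ℤ × ℤ) (a : ℤ) (y : GoldmanTorus ℤ) :
    goldmanBracket ℤ (Finsupp.single p a) y ∈ goldmanM := by
  induction y using Finsupp.induction with
  | zero => simp
  | single_add q b g _ _ ihy =>
    rw [map_add]
    exact Submodule.add_mem _ (goldmanBracket_single_mem_M p q a b) ihy

lemma goldmanBracket_mem_M (x y : GoldmanTorus ℤ) :
    goldmanBracket ℤ x y ∈ goldmanM := by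
  induction x using Finsupp.induction with
  | zero => simp
  | single_add p a f _ _ ihx =>
    rw [map_add, LinearMap.add_apply]
    exact Submodule.add_mem _ (goldmanBracket_single_left_mem_M p a y) ihx

lemma goldman_gcd_single_mem_derived (p : ℤ × ℤ) :
    (Int.gcd p.1 p.2 : ℤ) • Finsupp.single p (1 : ℤ) ∈
      ((⁅(⊤ : LieIdeal ℤ (GoldmanTorus ℤ)), (⊤ : LieIdeal ℤ (GoldmanTorus ℤ))⁆ :
        LieIdeal ℤ (GoldmanTorus ℤ)) : Submodule ℤ (GoldmanTorus ℤ)) := by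
  set u : ℤ × ℤ := (Int.gcdB p.1 p.2, -Int.gcdA p.1 p.2) with hu
  set v : ℤ × ℤ := p - u with hv
  have hb : goldmanBracket ℤ (Finsupp.single u (1 : ℤ)) (Finsupp.single v (1 : ℤ))
      = (Int.gcd p.1 p.2 : ℤ) • Finsupp.single p (1 : ℤ) := by
    rw [goldmanBracket_single]
    have huv : u + v = p := by rw [hv]; abel
    rw [huv, Finsupp.smul_single]
    congr 1
    have hbez := Int.gcd_eq_gcd_ab p.1 p.2
    simp only [smul_eq_mul, mul_one, one_mul, Int.cast_id]
    rw [hbez]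
    simp only [goldmanForm, hv, hu, Prod.fst_sub, Prod.snd_sub]
    ring
  rw [← hb]
  exact LieSubmodule.lie_mem_lie (LieSubmodule.mem_top _) (LieSubmodule.mem_top _)

end GoldmanDerived

theorem goldmanTorus_int_derived_eq_span :
    ((⁅(⊤ : LieIdeal ℤ (GoldmanTorus ℤ)), (⊤ : LieIdeal ℤ (GoldmanTorus ℤ))⁆ :
        LieIdeal ℤ (GoldmanTorus ℤ)) : Submodule ℤ (GoldmanTorus ℤ))
      = Submodule.span ℤ {w : GoldmanTorus ℤ | ∃ p : ℤ × ℤ, p ≠ 0 ∧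
          w = (Int.gcd p.1 p.2 : ℤ) • Finsupp.single p 1} ∧
    ∀ w : GoldmanTorus ℤ,
      (w ∈ ⁅(⊤ : LieIdeal ℤ (GoldmanTorus ℤ)), (⊤ : LieIdeal ℤ (GoldmanTorus ℤ))⁆ ↔
        (w (0, 0) = 0 ∧
          ∀ i j : ℤ, (i, j) ≠ (0, 0) → (Int.gcd i j : ℤ) ∣ w (i, j))) := by
  
  set D : Submodule ℤ (GoldmanTorus ℤ) :=
    ((⁅(⊤ : LieIdeal ℤ (GoldmanTorus ℤ)), (⊤ : LieIdeal ℤ (GoldmanTorus ℤ))⁆ :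
        LieIdeal ℤ (GoldmanTorus ℤ)) : Submodule ℤ (GoldmanTorus ℤ)) with hD
  set S : Set (GoldmanTorus ℤ) := {w : GoldmanTorus ℤ | ∃ p : ℤ × ℤ, p ≠ 0 ∧
      w = (Int.gcd p.1 p.2 : ℤ) • Finsupp.single p 1} with hS
  have hDM : D ≤ goldmanM := by
    rw [hD, LieIdeal.toLieSubalgebra_toSubmodule,
      LieSubmodule.lieIdeal_oper_eq_linear_span', Submodule.span_le]
    rintro w ⟨x, -, y, -, rfl⟩
    exact goldmanBracket_mem_M x y
  have hMS : goldmanM ≤ Submodule.span ℤ S := by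
    rintro w ⟨h0, h⟩
    rw [← Finsupp.sum_single w]
    refine Submodule.finsuppSum_mem _ _ _ _ (fun p hp => ?_)
    by_cases hp0 : p = 0
    · have hwp : w p = 0 := by rw [hp0]; exact h0
      simp [hwp]
    · obtain ⟨c, hc⟩ := h p hp0
      have heq : Finsupp.single p (w p)
          = c • ((Int.gcd p.1 p.2 : ℤ) • Finsupp.single p (1 : ℤ)) := by
        rw [smul_smul, Finsupp.smul_single, smul_eq_mul, mul_one, hc, mul_comm]
      rw [heq]
      exact Submodule.smul_mem _ _ (Submodule.subset_span ⟨p, hp0, rfl⟩)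
  have hSD : Submodule.span ℤ S ≤ D := by
    rw [Submodule.span_le]
    rintro w ⟨p, hp, rfl⟩
    exact goldman_gcd_single_mem_derived p
  have hmain : D = Submodule.span ℤ S := le_antisymm (hDM.trans hMS) hSD
  refine ⟨hmain, fun w => ?_⟩
  constructor
  · intro hw
    have hw' : w ∈ goldmanM := hDM hw
    exact ⟨hw'.1, fun i j hij => hw'.2 (i, j) (by simpa [Prod.ext_iff] using hij)⟩
  · rintro ⟨h0, h⟩
    have hwM : w ∈ goldmanM := ⟨h0, fun p hp => by
      have hd := h p.1 p.2 (by simpa [Prod.ext_iff] using hp)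
      simpa using hd⟩
    exact hSD (hMS hwM)
end

section
/- The lower central series of the Goldman Lie algebra 𝔊_ℤ of the closed torus stabilizes at the first step: with G₀ = 𝔊_ℤ and G_{n+1} = [𝔊_ℤ, G_n], one has G_n = [𝔊_ℤ, 𝔊_ℤ] for every n ≥ 1; equivalently, [𝔊_ℤ, [𝔊_ℤ, 𝔊_ℤ]] = [𝔊_ℤ, 𝔊_ℤ]. -/
section Key

open LieSubmodule

local notation "𝔊" => GoldmanTorus ℤ

private lemma single_lie (p q : ℤ × ℤ) (a b : ℤ) :
    ⁅(Finsupp.single p a : 𝔊), (Finsupp.single q b : 𝔊)⁆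
      = Finsupp.single (p + q) (a * b * goldmanForm p q) := by
  rw [goldmanTorus_lie_def, goldmanBracket_single]; norm_num

private lemma e10_mem : (Finsupp.single ((1, 0) : ℤ × ℤ) (1 : ℤ) : 𝔊)
    ∈ ⁅(⊤ : LieIdeal ℤ 𝔊), (⊤ : LieIdeal ℤ 𝔊)⁆ := by
  have h := LieSubmodule.lie_mem_lie (I := (⊤ : LieIdeal ℤ 𝔊)) (N := (⊤ : LieIdeal ℤ 𝔊))
    (x := (Finsupp.single ((1, -1) : ℤ × ℤ) (1 : ℤ) : 𝔊))
    (m := (Finsupp.single ((0, 1) : ℤ × ℤ) (1 : ℤ) : 𝔊))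
    (LieSubmodule.mem_top _) (LieSubmodule.mem_top _)
  rwa [single_lie, show ((1, -1) : ℤ × ℤ) + (0, 1) = (1, 0) by norm_num [Prod.ext_iff],
    show (1 : ℤ) * 1 * goldmanForm (1, -1) (0, 1) = 1 by norm_num [goldmanForm]] at h

private lemma e01_mem : (Finsupp.single ((0, 1) : ℤ × ℤ) (1 : ℤ) : 𝔊)
    ∈ ⁅(⊤ : LieIdeal ℤ 𝔊), (⊤ : LieIdeal ℤ 𝔊)⁆ := by
  have h := LieSubmodule.lie_mem_lie (I := (⊤ : LieIdeal ℤ 𝔊)) (N := (⊤ : LieIdeal ℤ 𝔊))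
    (x := (Finsupp.single ((1, 1) : ℤ × ℤ) (1 : ℤ) : 𝔊))
    (m := (Finsupp.single ((-1, 0) : ℤ × ℤ) (1 : ℤ) : 𝔊))
    (LieSubmodule.mem_top _) (LieSubmodule.mem_top _)
  rwa [single_lie, show ((1, 1) : ℤ × ℤ) + (-1, 0) = (0, 1) by norm_num [Prod.ext_iff],
    show (1 : ℤ) * 1 * goldmanForm (1, 1) (-1, 0) = 1 by norm_num [goldmanForm]] at h

private lemma single_snd_mem (s : ℤ × ℤ) :
    (Finsupp.single s s.2 : 𝔊)
      ∈ ⁅(⊤ : LieIdeal ℤ 𝔊), ⁅(⊤ : LieIdeal ℤ 𝔊), (⊤ : LieIdeal ℤ 𝔊)⁆⁆ := by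
  have h := LieSubmodule.lie_mem_lie (I := (⊤ : LieIdeal ℤ 𝔊))
    (N := ⁅(⊤ : LieIdeal ℤ 𝔊), (⊤ : LieIdeal ℤ 𝔊)⁆)
    (x := (Finsupp.single (s - (1, 0)) (1 : ℤ) : 𝔊))
    (LieSubmodule.mem_top _) e10_mem
  rw [single_lie, sub_add_cancel] at h
  have h2 := SMulMemClass.smul_mem (-1 : ℤ) h
  rwa [Finsupp.smul_single, smul_eq_mul,
    show (-1 : ℤ) * (1 * 1 * goldmanForm (s - (1, 0)) (1, 0)) = s.2 by
      simp only [goldmanForm, Prod.fst_sub, Prod.snd_sub]; ring] at h2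

private lemma single_fst_mem (s : ℤ × ℤ) :
    (Finsupp.single s s.1 : 𝔊)
      ∈ ⁅(⊤ : LieIdeal ℤ 𝔊), ⁅(⊤ : LieIdeal ℤ 𝔊), (⊤ : LieIdeal ℤ 𝔊)⁆⁆ := by
  have h := LieSubmodule.lie_mem_lie (I := (⊤ : LieIdeal ℤ 𝔊))
    (N := ⁅(⊤ : LieIdeal ℤ 𝔊), (⊤ : LieIdeal ℤ 𝔊)⁆)
    (x := (Finsupp.single (s - (0, 1)) (1 : ℤ) : 𝔊))
    (LieSubmodule.mem_top _) e01_mem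
  rw [single_lie, sub_add_cancel] at h
  rwa [show (1 : ℤ) * 1 * goldmanForm (s - (0, 1)) (0, 1) = s.1 by
      simp only [goldmanForm, Prod.fst_sub, Prod.snd_sub]; ring] at h

private lemma lie_mem_N (x y : 𝔊) :
    ⁅x, y⁆ ∈ ⁅(⊤ : LieIdeal ℤ 𝔊), ⁅(⊤ : LieIdeal ℤ 𝔊), (⊤ : LieIdeal ℤ 𝔊)⁆⁆ := by
  set N := ⁅(⊤ : LieIdeal ℤ 𝔊), ⁅(⊤ : LieIdeal ℤ 𝔊), (⊤ : LieIdeal ℤ 𝔊)⁆⁆ with hN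
  induction x using Finsupp.induction with
  | zero => simp
  | single_add p a f _ _ ihx =>
    rw [add_lie]
    refine add_mem ?_ ihx
    clear ihx
    induction y using Finsupp.induction with
    | zero => simp
    | single_add q b g _ _ ihy =>
      rw [lie_add]
      refine add_mem ?_ ihy
      rw [single_lie]
      have key : a * b * goldmanForm p q
          = (a * b * p.1) * (p + q).2 + (-(a * b * p.2)) * (p + q).1 := by
        simp only [goldmanForm, Prod.fst_add, Prod.snd_add]; ring
      rw [key, Finsupp.single_add]
      refine add_mem ?_ ?_
      · have := SMulMemClass.smul_mem (S := LieIdeal ℤ 𝔊) (a * b * p.1) (single_snd_mem (p + q))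
        rwa [Finsupp.smul_single, smul_eq_mul] at this
      · have := SMulMemClass.smul_mem (S := LieIdeal ℤ 𝔊) (-(a * b * p.2)) (single_fst_mem (p + q))
        rwa [Finsupp.smul_single, smul_eq_mul] at this

private lemma key_eq :
    ⁅(⊤ : LieIdeal ℤ 𝔊), ⁅(⊤ : LieIdeal ℤ 𝔊), (⊤ : LieIdeal ℤ 𝔊)⁆⁆
      = ⁅(⊤ : LieIdeal ℤ 𝔊), (⊤ : LieIdeal ℤ 𝔊)⁆ := by
  refine le_antisymm (LieSubmodule.lie_le_right _ _) ?_
  rw [LieSubmodule.lie_le_iff]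
  intro x _ m _
  exact lie_mem_N x m

end Key

theorem goldmanTorus_int_lowerCentralSeries_stabilizes :
    (∀ n : ℕ, 1 ≤ n →
      LieModule.lowerCentralSeries ℤ (GoldmanTorus ℤ) (GoldmanTorus ℤ) n
        = ⁅(⊤ : LieIdeal ℤ (GoldmanTorus ℤ)), (⊤ : LieIdeal ℤ (GoldmanTorus ℤ))⁆) ∧
    ⁅(⊤ : LieIdeal ℤ (GoldmanTorus ℤ)),
        ⁅(⊤ : LieIdeal ℤ (GoldmanTorus ℤ)), (⊤ : LieIdeal ℤ (GoldmanTorus ℤ))⁆⁆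
      = ⁅(⊤ : LieIdeal ℤ (GoldmanTorus ℤ)), (⊤ : LieIdeal ℤ (GoldmanTorus ℤ))⁆ := by
  refine ⟨?_, key_eq⟩
  intro n hn
  obtain ⟨m, rfl⟩ := Nat.exists_eq_add_of_le hn
  induction m with
  | zero => rw [LieModule.lowerCentralSeries_succ, LieModule.lowerCentralSeries_zero]
  | succ k ih =>
    rw [show 1 + (k + 1) = (1 + k) + 1 by ring, LieModule.lowerCentralSeries_succ, ih (Nat.le_add_right 1 k), key_eq]
end

section
/- The Goldman Lie algebra 𝔊_ℤ of the closed torus is not nilpotent as a Lie algebra over ℤ: every term of its lower central series is nonzero. -/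
theorem goldmanTorus_int_not_nilpotent :
    ∀ n : ℕ, LieModule.lowerCentralSeries ℤ (GoldmanTorus ℤ) (GoldmanTorus ℤ) n ≠ ⊥ := by
  have key : ∀ n : ℕ, (Finsupp.single ((1 : ℤ), (n : ℤ)) (1 : ℤ) : GoldmanTorus ℤ)
      ∈ LieModule.lowerCentralSeries ℤ (GoldmanTorus ℤ) (GoldmanTorus ℤ) n := by
    intro n
    induction n with
    | zero => simp
    | succ k ih =>
      rw [LieModule.lowerCentralSeries_succ]
      have hmem : ⁅(Finsupp.single ((0 : ℤ), (1 : ℤ)) (1 : ℤ) : GoldmanTorus ℤ),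
          (Finsupp.single ((1 : ℤ), (k : ℤ)) (1 : ℤ) : GoldmanTorus ℤ)⁆
          ∈ ⁅(⊤ : LieIdeal ℤ (GoldmanTorus ℤ)),
              LieModule.lowerCentralSeries ℤ (GoldmanTorus ℤ) (GoldmanTorus ℤ) k⁆ :=
        LieSubmodule.lie_mem_lie (LieSubmodule.mem_top _) ih
      have hbr : ⁅(Finsupp.single ((0 : ℤ), (1 : ℤ)) (1 : ℤ) : GoldmanTorus ℤ),
          (Finsupp.single ((1 : ℤ), (k : ℤ)) (1 : ℤ) : GoldmanTorus ℤ)⁆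
          = -(Finsupp.single ((1 : ℤ), ((k : ℤ) + 1)) (1 : ℤ) : GoldmanTorus ℤ) := by
        rw [goldmanTorus_lie_def, goldmanBracket_single]
        simp [goldmanForm, Prod.ext_iff, ← Finsupp.single_neg, add_comm]
      rw [hbr] at hmem
      have : (Finsupp.single ((1 : ℤ), ((k : ℤ) + 1)) (1 : ℤ) : GoldmanTorus ℤ)
          ∈ ⁅(⊤ : LieIdeal ℤ (GoldmanTorus ℤ)),
              LieModule.lowerCentralSeries ℤ (GoldmanTorus ℤ) (GoldmanTorus ℤ) k⁆ := by
        simpa using neg_mem hmem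
      push_cast
      exact this
  intro n hbot
  have := key n
  rw [hbot, LieSubmodule.mem_bot] at this
  simp [Finsupp.single_eq_zero] at this
end

section
/- In the Goldman Lie algebra 𝔊_ℤ of the closed torus, for every (i,j) ∈ ℤ² with (i,j) ≠ (0,0), the element gcd(i,j)·e_{(i,j)} lies in [𝔊_ℤ, [𝔊_ℤ, 𝔊_ℤ]]: explicitly, writing d = gcd(i,j) = x·i + y·j with x, y ∈ ℤ, one has [e_{(i+y, j−x)}, e_{(−y, x)}] = d·e_{(i,j)}, where e_{(−y,x)} itself lies in the derived subalgebra [𝔊_ℤ, 𝔊_ℤ]. -/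
theorem goldmanTorus_int_gcd_smul_mem_second_lcs (i j x y : ℤ)
    (hij : (i, j) ≠ (0, 0)) (hxy : (Int.gcd i j : ℤ) = x * i + y * j) :
    ⁅(Finsupp.single (i + y, j - x) 1 : GoldmanTorus ℤ),
        (Finsupp.single (-y, x) 1 : GoldmanTorus ℤ)⁆
        = (Int.gcd i j : ℤ) • (Finsupp.single (i, j) 1 : GoldmanTorus ℤ) ∧
    (Finsupp.single (-y, x) 1 : GoldmanTorus ℤ)
        ∈ ⁅(⊤ : LieIdeal ℤ (GoldmanTorus ℤ)), (⊤ : LieIdeal ℤ (GoldmanTorus ℤ))⁆ ∧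
    (Int.gcd i j : ℤ) • (Finsupp.single (i, j) 1 : GoldmanTorus ℤ)
        ∈ ⁅(⊤ : LieIdeal ℤ (GoldmanTorus ℤ)),
            ⁅(⊤ : LieIdeal ℤ (GoldmanTorus ℤ)), (⊤ : LieIdeal ℤ (GoldmanTorus ℤ))⁆⁆ := by

  have hd : (Int.gcd i j : ℤ) ≠ 0 := by
    intro h
    rw [Int.natCast_eq_zero, Int.gcd_eq_zero_iff] at h
    exact hij (by simp [h.1, h.2])
  obtain ⟨i', hi'⟩ : (Int.gcd i j : ℤ) ∣ i := Int.gcd_dvd_left i j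
  obtain ⟨j', hj'⟩ : (Int.gcd i j : ℤ) ∣ j := Int.gcd_dvd_right i j
  have h2 : (Int.gcd i j : ℤ) = x * ((Int.gcd i j : ℤ) * i') + y * ((Int.gcd i j : ℤ) * j') := by
    rw [← hi', ← hj']; exact hxy
  have h1 : x * i' + y * j' = 1 := by
    refine mul_left_cancel₀ hd ?_
    linear_combination -h2
  have hb1 : ⁅(Finsupp.single (i + y, j - x) 1 : GoldmanTorus ℤ),
      (Finsupp.single (-y, x) 1 : GoldmanTorus ℤ)⁆
      = (Int.gcd i j : ℤ) • (Finsupp.single (i, j) 1 : GoldmanTorus ℤ) := by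
    rw [goldmanTorus_lie_def, goldmanBracket_single]
    have hp : ((i + y, j - x) : ℤ × ℤ) + (-y, x) = (i, j) := by
      simp [Prod.ext_iff]
    have hf : goldmanForm (i + y, j - x) (-y, x) = (Int.gcd i j : ℤ) := by
      simp only [goldmanForm, hxy]; ring
    rw [hp, hf, Finsupp.smul_single]
    simp
  have hb2 : (Finsupp.single (-y, x) 1 : GoldmanTorus ℤ)
      = ⁅(Finsupp.single (-y + i', x + j') 1 : GoldmanTorus ℤ),
          (Finsupp.single (-i', -j') 1 : GoldmanTorus ℤ)⁆ := by
    rw [goldmanTorus_lie_def, goldmanBracket_single]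
    have hp : ((-y + i', x + j') : ℤ × ℤ) + (-i', -j') = (-y, x) := by
      simp [Prod.ext_iff]
    have hf : goldmanForm (-y + i', x + j') (-i', -j') = 1 := by
      simp only [goldmanForm]; rw [← h1]; ring
    rw [hp, hf]
    simp
  have hmem : (Finsupp.single (-y, x) 1 : GoldmanTorus ℤ)
      ∈ ⁅(⊤ : LieIdeal ℤ (GoldmanTorus ℤ)), (⊤ : LieIdeal ℤ (GoldmanTorus ℤ))⁆ := by
    rw [hb2]
    exact LieSubmodule.lie_mem_lie (LieSubmodule.mem_top _) (LieSubmodule.mem_top _)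
  refine ⟨hb1, hmem, ?_⟩
  rw [← hb1]
  exact LieSubmodule.lie_mem_lie (LieSubmodule.mem_top _) hmem
end

section
/- In the Goldman Lie algebra 𝔊_ℤ of the closed torus, for every nonzero integer n, the element n·e_{(n,0)} lies in [𝔊_ℤ, [𝔊_ℤ, 𝔊_ℤ]]: explicitly, for any integer i one has [e_{(i,−1)}, e_{(n−i,1)}] = n·e_{(n,0)}, where e_{(n−i,1)} lies in the derived subalgebra [𝔊_ℤ, 𝔊_ℤ] since gcd(n−i, 1) = 1; similarly n·e_{(0,n)} lies in [𝔊_ℤ, [𝔊_ℤ, 𝔊_ℤ]]. -/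
theorem goldmanTorus_int_n_smul_mem_second_lcs (n : ℤ) (hn : n ≠ 0) :
    (∀ i : ℤ,
      ⁅(Finsupp.single (i, -1) 1 : GoldmanTorus ℤ),
          (Finsupp.single (n - i, 1) 1 : GoldmanTorus ℤ)⁆
          = n • (Finsupp.single (n, 0) 1 : GoldmanTorus ℤ) ∧
      (Finsupp.single (n - i, 1) 1 : GoldmanTorus ℤ)
          ∈ ⁅(⊤ : LieIdeal ℤ (GoldmanTorus ℤ)), (⊤ : LieIdeal ℤ (GoldmanTorus ℤ))⁆) ∧
    n • (Finsupp.single (n, 0) 1 : GoldmanTorus ℤ)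
        ∈ ⁅(⊤ : LieIdeal ℤ (GoldmanTorus ℤ)),
            ⁅(⊤ : LieIdeal ℤ (GoldmanTorus ℤ)), (⊤ : LieIdeal ℤ (GoldmanTorus ℤ))⁆⁆ ∧
    n • (Finsupp.single (0, n) 1 : GoldmanTorus ℤ)
        ∈ ⁅(⊤ : LieIdeal ℤ (GoldmanTorus ℤ)),
            ⁅(⊤ : LieIdeal ℤ (GoldmanTorus ℤ)), (⊤ : LieIdeal ℤ (GoldmanTorus ℤ))⁆⁆ := by
  have lie_single : ∀ p q : ℤ × ℤ,
      ⁅(Finsupp.single p 1 : GoldmanTorus ℤ), (Finsupp.single q 1 : GoldmanTorus ℤ)⁆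
        = Finsupp.single (p + q) (goldmanForm p q) := by
    intro p q
    rw [goldmanTorus_lie_def, goldmanBracket_single]
    norm_num
  have mem_row : ∀ k : ℤ, (Finsupp.single (k, 1) 1 : GoldmanTorus ℤ)
      ∈ ⁅(⊤ : LieIdeal ℤ (GoldmanTorus ℤ)), (⊤ : LieIdeal ℤ (GoldmanTorus ℤ))⁆ := by
    intro k
    have h := lie_single (k + 1, 1) (-1, 0)
    have hform : goldmanForm (k + 1, 1) (-1, 0) = 1 := by simp [goldmanForm]
    rw [hform] at h
    have hsum : ((k + 1 : ℤ), (1 : ℤ)) + (-1, 0) = (k, 1) := by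
      simp [Prod.ext_iff]
    rw [hsum] at h
    rw [← h]
    exact LieSubmodule.lie_mem_lie trivial trivial
  have mem_col : ∀ k : ℤ, (Finsupp.single (-1, k) 1 : GoldmanTorus ℤ)
      ∈ ⁅(⊤ : LieIdeal ℤ (GoldmanTorus ℤ)), (⊤ : LieIdeal ℤ (GoldmanTorus ℤ))⁆ := by
    intro k
    have h := lie_single (-1, k + 1) (0, -1)
    have hform : goldmanForm (-1, k + 1) (0, -1) = 1 := by simp [goldmanForm]
    rw [hform] at h
    have hsum : ((-1 : ℤ), (k + 1 : ℤ)) + (0, -1) = (-1, k) := by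
      simp [Prod.ext_iff]
    rw [hsum] at h
    rw [← h]
    exact LieSubmodule.lie_mem_lie trivial trivial
  have hmain : ∀ i : ℤ,
      ⁅(Finsupp.single (i, -1) 1 : GoldmanTorus ℤ),
          (Finsupp.single (n - i, 1) 1 : GoldmanTorus ℤ)⁆
        = n • (Finsupp.single (n, 0) 1 : GoldmanTorus ℤ) := by
    intro i
    rw [lie_single]
    have hform : goldmanForm (i, -1) (n - i, 1) = n := by simp only [goldmanForm]; ring
    have hsum : ((i : ℤ), (-1 : ℤ)) + (n - i, 1) = (n, 0) := by simp [Prod.ext_iff]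
    rw [hform, hsum, Finsupp.smul_single, smul_eq_mul, mul_one]
  refine ⟨fun i => ⟨hmain i, mem_row (n - i)⟩, ?_, ?_⟩
  · rw [← hmain 0]
    exact LieSubmodule.lie_mem_lie trivial (mem_row (n - 0))
  · have h := lie_single (1, 0) (-1, n)
    have hform : goldmanForm (1, 0) (-1, n) = n := by simp [goldmanForm]
    have hsum : ((1 : ℤ), (0 : ℤ)) + (-1, n) = (0, n) := by simp [Prod.ext_iff]
    rw [hform, hsum] at h
    have h2 : n • (Finsupp.single ((0 : ℤ), n) 1 : GoldmanTorus ℤ)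
        = Finsupp.single ((0 : ℤ), n) (n : ℤ) := by
      rw [Finsupp.smul_single, smul_eq_mul, mul_one]
    rw [h2, ← h]
    exact LieSubmodule.lie_mem_lie trivial (mem_col n)
end
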